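/- Suppose μ ∈ ℝ^d attains the optimal 1-clustering cost of P, i.e., c(P,{μ}) = opt(P,1). If opt(P,1) − opt(P,2) ≤ ε' for some ε' > 0, then every p ∈ P satisfies ‖p − μ‖ ≤ (ε'/w_min)^{1/z}. (Lemma 2) -/

import Mathlib

open scoped Classical

/-- Points of `ℝ^d` with the Euclidean norm. -/
abbrev Pt (d : ℕ) := EuclideanSpace ℝ (Fin d)

/-- Weighted clustering cost `c(P,Q) = Σ_{p∈P} w_p · (min_{q∈Q} ‖p−q‖)^z`
(the minimum is expressed as an infimum, which agrees with the minimum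
for nonempty finite `Q`). -/
noncomputable def cCost {d : ℕ} (z : ℝ) (w : Pt d → ℝ) (P Q : Finset (Pt d)) : ℝ :=
  ∑ p ∈ P, w p * (sInf ((fun q => dist p q) '' (Q : Set (Pt d)))) ^ z

/-- Optimal `k`-clustering cost `opt(P,k) = inf { c(P,Q) : |Q| = k }` -/
noncomputable def optCost {d : ℕ} (z : ℝ) (w : Pt d → ℝ) (P : Finset (Pt d)) (k : ℕ) : ℝ :=
  sInf { r : ℝ | ∃ Q : Finset (Pt d), Q.card = k ∧ r = cCost z w P Q }

lemma bdd_dist_img {d : ℕ} (p : Pt d) (Q : Finset (Pt d)) :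
    BddBelow ((fun q => dist p q) '' (Q : Set (Pt d))) := by
  refine ⟨0, fun x hx => ?_⟩
  obtain ⟨q, -, rfl⟩ := hx
  exact dist_nonneg

lemma sInf_dist_nonneg {d : ℕ} (p : Pt d) (Q : Finset (Pt d)) :
    0 ≤ sInf ((fun q => dist p q) '' (Q : Set (Pt d))) := by
  apply Real.sInf_nonneg
  rintro x ⟨q, -, rfl⟩
  exact dist_nonneg

lemma cCost_nonneg {d : ℕ} (z : ℝ) (w : Pt d → ℝ) (P Q : Finset (Pt d))
    (hw : ∀ p ∈ P, 0 ≤ w p) : 0 ≤ cCost z w P Q := by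
  apply Finset.sum_nonneg
  intro p hp
  exact mul_nonneg (hw p hp) (Real.rpow_nonneg (sInf_dist_nonneg p Q) z)

/-- Lemma 2: if `μ` attains `opt(P,1)` and `opt(P,1) − opt(P,2) ≤ ε'`, then every `p ∈ P`
satisfies `‖p − μ‖ ≤ (ε'/w_min)^{1/z}`, where `w_min = min_{p∈P} w_p`. -/
theorem lemma2 {d : ℕ} (z : ℝ) (hz : 0 < z)
    (P : Finset (Pt d)) (hP : P.Nonempty)
    (w : Pt d → ℝ) (hw : ∀ p ∈ P, 0 < w p)
    (μ : Pt d) (hμ : cCost z w P {μ} = optCost z w P 1)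
    (ε' : ℝ) (hε' : 0 < ε')
    (hgap : optCost z w P 1 - optCost z w P 2 ≤ ε') :
    ∀ p ∈ P, dist p μ ≤ (ε' / P.inf' hP w) ^ (1 / z) := by
  intro p hp
  set wm := P.inf' hP w with hwm
  have hwm_pos : 0 < wm := by
    obtain ⟨q, hq, hqe⟩ := P.exists_mem_eq_inf' hP w
    rw [hwm, hqe]; exact hw q hq
  have hwm_le : wm ≤ w p := Finset.inf'_le w hp
  have hRHS_nonneg : 0 ≤ (ε' / wm) ^ (1 / z) :=
    Real.rpow_nonneg (div_nonneg hε'.le hwm_pos.le) _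
  by_cases hpμ : p = μ
  · simpa [hpμ] using hRHS_nonneg
  -- singleton sInf simplification
  have hsingle : ∀ q : Pt d, sInf ((fun q' => dist q q') '' (({μ} : Finset (Pt d)) : Set (Pt d)))
      = dist q μ := by
    intro q
    simp
  -- cost of {μ, p} bounds
  have key : w p * dist p μ ^ z ≤ ε' := by
    have hcard : ({μ, p} : Finset (Pt d)).card = 2 := by
      rw [Finset.card_insert_of_notMem (by simp [Ne.symm hpμ])]
      simp
    have h1 : optCost z w P 2 ≤ cCost z w P {μ, p} := by
      apply csInf_le
      · exact ⟨0, fun r ⟨Q, _, hr⟩ => hr ▸ cCost_nonneg z w P Q (fun q hq => (hw q hq).le)⟩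
      · exact ⟨{μ, p}, hcard, rfl⟩
    have h2 : cCost z w P {μ, p} + w p * dist p μ ^ z ≤ cCost z w P {μ} := by
      unfold cCost
      rw [← Finset.add_sum_erase P _ hp, ← Finset.add_sum_erase P
        (fun q => w q * (sInf ((fun q' => dist q q') '' (({μ} : Finset (Pt d)) : Set (Pt d)))) ^ z) hp]
      have hterm_p : sInf ((fun q' => dist p q') '' (({μ, p} : Finset (Pt d)) : Set (Pt d))) = 0 := by
        refine le_antisymm ?_ (sInf_dist_nonneg p _)
        have h0 : (0 : ℝ) ∈ (fun q' => dist p q') '' (({μ, p} : Finset (Pt d)) : Set (Pt d)) := by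
          exact ⟨p, by simp, by simp⟩
        exact csInf_le (bdd_dist_img p _) h0
      rw [hterm_p, Real.zero_rpow hz.ne', mul_zero, zero_add, hsingle p]
      rw [add_comm]
      apply add_le_add le_rfl
      apply Finset.sum_le_sum
      intro q hq
      rw [hsingle q]
      apply mul_le_mul_of_nonneg_left _ (hw q (Finset.mem_of_mem_erase hq)).le
      apply Real.rpow_le_rpow (sInf_dist_nonneg q _) _ hz.le
      exact csInf_le (bdd_dist_img q _) ⟨μ, by simp, rfl⟩
    calc w p * dist p μ ^ z ≤ cCost z w P {μ} - cCost z w P {μ, p} := by linarith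
      _ ≤ optCost z w P 1 - optCost z w P 2 := by rw [hμ]; linarith
      _ ≤ ε' := hgap
  have hdz : dist p μ ^ z ≤ ε' / wm := by
    rw [le_div_iff₀ hwm_pos]
    calc dist p μ ^ z * wm = wm * dist p μ ^ z := mul_comm _ _
      _ ≤ w p * dist p μ ^ z :=
          mul_le_mul_of_nonneg_right hwm_le (Real.rpow_nonneg dist_nonneg z)
      _ ≤ ε' := key
  calc dist p μ = (dist p μ ^ z) ^ (1 / z) := by
        rw [one_div, Real.rpow_rpow_inv dist_nonneg hz.ne']
    _ ≤ (ε' / wm) ^ (1 / z) :=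
        Real.rpow_le_rpow (Real.rpow_nonneg dist_nonneg z) hdz (by positivity)
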